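/- Let A be an object of a category C. The functor from the category of epimorphisms onto A (morphisms f : B ⟶ A, with morphisms over A) to the comma category (A ↓ cod), sending f to (f, 1_A), is initial, provided pullbacks of such epimorphisms along arbitrary maps exist and remain in the class. -/

import Mathlib

open CategoryTheory CategoryTheory.Limits

variable {C : Type*} [Category C]

/-- The category of extensions in `C`: arrows belonging to a class `E` of morphisms. -/
def ExtCat (E : MorphismProperty C) : Type _ :=
  CategoryTheory.ObjectProperty.FullSubcategory (fun f : Arrow C => E f.hom)

instance (E : MorphismProperty C) : Category (ExtCat E) :=
  ObjectProperty.FullSubcategory.category _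

/-- The codomain functor from the category of extensions to `C`. -/
def codF (E : MorphismProperty C) : ExtCat E ⥤ C :=
  ObjectProperty.ι _ ⋙ Arrow.rightFunc

/-- The category of extensions of a fixed object `A`: morphisms `f : B ⟶ A` in the class `E`,
with morphisms over `A`. -/
def ExtOver (E : MorphismProperty C) (A : C) : Type _ :=
  CategoryTheory.ObjectProperty.FullSubcategory (fun f : Over A => E f.hom)

instance (E : MorphismProperty C) (A : C) : Category (ExtOver E A) :=
  ObjectProperty.FullSubcategory.category _

/-- An extension of `A`, viewed as an object of the category of extensions. -/
def toExt {E : MorphismProperty C} {A : C} (f : ExtOver E A) : ExtCat E :=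
  ⟨Arrow.mk f.obj.hom, f.property⟩

/-- A morphism of extensions of `A`, viewed as a morphism in the category of extensions
whose codomain component is the identity of `A`. -/
def toExtMap {E : MorphismProperty C} {A : C} {f g : ExtOver E A} (u : f ⟶ g) :
    toExt f ⟶ toExt g :=
  ObjectProperty.homMk (Arrow.homMk (u := u.hom.left) (v := 𝟙 A)
    (by show u.hom.left ≫ g.obj.hom = f.obj.hom ≫ 𝟙 A
        exact (Over.w (u.hom : f.obj ⟶ g.obj)).trans (Category.comp_id _).symm))

theorem toExtMap_id {E : MorphismProperty C} {A : C} (f : ExtOver E A) :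
    toExtMap (𝟙 f) = 𝟙 (toExt f) := by
  apply ObjectProperty.hom_ext
  apply CommaMorphism.ext <;> rfl

theorem toExtMap_comp {E : MorphismProperty C} {A : C} {f g h : ExtOver E A}
    (u : f ⟶ g) (v : g ⟶ h) :
    toExtMap (u ≫ v) = toExtMap u ≫ toExtMap v := by
  apply ObjectProperty.hom_ext
  apply CommaMorphism.ext
  · rfl
  · exact (Category.id_comp _).symm

/-- The functor sending an extension `f : B ⟶ A` of `A` to the pair `(f, 1_A)` in the
comma category `(A ↓ cod)`. -/
def extOverToComma (E : MorphismProperty C) (A : C) :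
    ExtOver E A ⥤ StructuredArrow A (codF E) where
  obj f := StructuredArrow.mk (show A ⟶ (codF E).obj (toExt f) from 𝟙 A)
  map u := StructuredArrow.homMk (toExtMap u)
    (show 𝟙 A ≫ (codF E).map (toExtMap u) = 𝟙 A by simp [codF, toExtMap]; exact Category.id_comp _)
  map_id f := by
    apply CommaMorphism.ext
    · rfl
    · exact toExtMap_id f
  map_comp u v := by
    apply CommaMorphism.ext
    · rfl
    · exact toExtMap_comp u v

/-- If the class of extensions consists of epimorphisms and is stable under base change
(and the relevant pullbacks exist), then the functor from extensions of `A` to the comma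
category `(A ↓ cod)` is initial. -/
theorem stmt3 (E : MorphismProperty C) (A : C) [HasPullbacks C]
    (hepi : ∀ ⦃X Y : C⦄ (f : X ⟶ Y), E f → Epi f)
    (hE : E.IsStableUnderBaseChange) :
    (extOverToComma E A).Initial := by
  haveI := hE
  constructor
  intro d
  -- data of d
  set f : d.right.obj.left ⟶ d.right.obj.right := d.right.obj.hom with hf
  have hfE : E f := d.right.property
  set g : A ⟶ d.right.obj.right := d.hom with hg
  -- canonical object: pullback of f along g
  let P : ExtOver E A := ⟨Over.mk (pullback.snd f g), E.pullback_snd f g hfE⟩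
  let φ0 : toExt P ⟶ d.right :=
    ObjectProperty.homMk (Arrow.homMk (u := pullback.fst f g) (v := g) (by exact pullback.condition))
  let X0 : CostructuredArrow (extOverToComma E A) d :=
    CostructuredArrow.mk (StructuredArrow.homMk φ0 (by
      show 𝟙 A ≫ (codF E).map φ0 = d.hom
      exact Category.id_comp _))
  -- every object maps to X0
  have key : ∀ Y : CostructuredArrow (extOverToComma E A) d, Nonempty (Y ⟶ X0) := by
    intro Y
    let ψ : (toExt Y.left).obj ⟶ d.right.obj := Y.hom.right.hom
    have hψr : ψ.right = g := by
      have h := Y.hom.w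
      simp [codF, extOverToComma] at h
      exact (Category.id_comp _).symm.trans h
    have hcomm : ψ.left ≫ f = Y.left.obj.hom ≫ g := by
      rw [← hψr]
      exact ψ.w
    let u : Y.left.obj.left ⟶ pullback f g :=
      pullback.lift ψ.left Y.left.obj.hom hcomm
    let m : Y.left ⟶ P := ObjectProperty.homMk (Over.homMk u (by exact pullback.lift_snd _ _ _))
    refine ⟨CostructuredArrow.homMk m ?_⟩
    apply CommaMorphism.ext
    · rfl
    · show toExtMap m ≫ φ0 = Y.hom.right
      apply ObjectProperty.hom_ext
      apply CommaMorphism.ext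
      · show u ≫ pullback.fst f g = ψ.left
        exact pullback.lift_fst _ _ _
      · show 𝟙 A ≫ g = ψ.right
        simp [hψr]
  haveI : Nonempty (CostructuredArrow (extOverToComma E A) d) := ⟨X0⟩
  apply zigzag_isConnected
  intro j₁ j₂
  exact (Relation.ReflTransGen.single (show Zag j₁ X0 from Or.inl (key j₁))).trans
    (Relation.ReflTransGen.single (show Zag X0 j₂ from Or.inr (key j₂)))
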